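/- Suppose there exist h > 0 and L_h ∈ (0,∞) such that lim_{n→∞} (∫_{nh}^{(n+1)h} ‖σ(s)‖_F² ds) · log n = L_h. Then there exists ε' > 0 such that S_h'(ε) < +∞ for all ε > ε' and S_h'(ε) = +∞ for all ε with 0 < ε < ε'. -/

import Mathlib

open MeasureTheory Filter

/-- The squared Frobenius norm of `σ(s)`. -/
noncomputable def F2 {d r : ℕ} (σ : ℝ → Matrix (Fin d) (Fin r) ℝ) (s : ℝ) : ℝ :=
  ∑ i : Fin d, ∑ j : Fin r, (σ s i j) ^ 2

/-- `θ_h(n)² = ∫_{nh}^{(n+1)h} ‖σ(s)‖_F² ds`. -/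
noncomputable def theta2 {d r : ℕ} (σ : ℝ → Matrix (Fin d) (Fin r) ℝ) (h : ℝ) (n : ℕ) : ℝ :=
  ∫ s in ((n : ℝ) * h)..(((n : ℝ) + 1) * h), F2 σ s

/-- The `n`-th summand of `S_h'(ε)`, taken to be `0` when `θ_h(n) = 0`. -/
noncomputable def Sterm {d r : ℕ} (σ : ℝ → Matrix (Fin d) (Fin r) ℝ) (h ε : ℝ) (n : ℕ) : ℝ :=
  if theta2 σ h n = 0 then 0
  else Real.sqrt (theta2 σ h n) * Real.exp (-(ε ^ 2) / (2 * theta2 σ h n))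

/-- `S_h'(ε) = ∑_{n=1}^∞ θ_h(n) exp(-ε²/(2θ_h(n)²)) < +∞`.
Since all summands are nonnegative, finiteness is expressed as summability. -/
def SFinite {d r : ℕ} (σ : ℝ → Matrix (Fin d) (Fin r) ℝ) (h ε : ℝ) : Prop :=
  Summable fun n : ℕ => Sterm σ h ε (n + 1)

lemma sqrt_le_self_of_one_le {x : ℝ} (hx : 1 ≤ x) : Real.sqrt x ≤ x := by
  nlinarith [Real.sq_sqrt (by linarith : (0:ℝ) ≤ x), Real.sqrt_nonneg x]

lemma Sterm_nonneg {d r : ℕ} (σ : ℝ → Matrix (Fin d) (Fin r) ℝ) (h ε : ℝ) (n : ℕ) :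
    0 ≤ Sterm σ h ε n := by
  unfold Sterm
  split
  · exact le_refl 0
  · positivity

theorem stmt_11 (d r : ℕ) (hd : 1 ≤ d) (hr : 1 ≤ r)
    (σ : ℝ → Matrix (Fin d) (Fin r) ℝ) (hσ : ContinuousOn σ (Set.Ici 0))
    (h L : ℝ) (hh : 0 < h) (hL : 0 < L)
    (hlim : Tendsto (fun n : ℕ => theta2 σ h n * Real.log n) atTop (nhds L)) :
    ∃ ε' : ℝ, 0 < ε' ∧ (∀ ε : ℝ, ε' < ε → SFinite σ h ε) ∧
      (∀ ε : ℝ, 0 < ε → ε < ε' → ¬ SFinite σ h ε) := by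
  -- basic facts
  have hlog : Tendsto (fun n : ℕ => Real.log n) atTop atTop :=
    Real.tendsto_log_atTop.comp tendsto_natCast_atTop_atTop
  have htheta0 : Tendsto (fun n : ℕ => theta2 σ h n) atTop (nhds 0) := by
    have h1 : Tendsto (fun n : ℕ => (Real.log n)⁻¹) atTop (nhds 0) :=
      hlog.inv_tendsto_atTop
    have h2 := hlim.mul h1
    rw [mul_zero] at h2
    refine h2.congr' ?_
    filter_upwards [hlog.eventually_ge_atTop 1] with n hn
    have : Real.log n ≠ 0 := by linarith
    field_simp
  have hθnn : ∀ n : ℕ, 0 ≤ theta2 σ h n := by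
    intro n
    unfold theta2
    apply intervalIntegral.integral_nonneg
    · nlinarith [Nat.cast_nonneg (α := ℝ) n]
    · intro u _
      unfold F2
      positivity
  refine ⟨Real.sqrt (2 * L), Real.sqrt_pos.mpr (by linarith), ?_, ?_⟩
  · -- convergence for ε > √(2L)
    intro ε hε
    have hε0 : 0 < ε := lt_trans (Real.sqrt_pos.mpr (by linarith)) hε
    have hε2 : 2 * L < ε ^ 2 := (Real.sqrt_lt' hε0).mp hε
    set p : ℝ := (1 + ε ^ 2 / (2 * L)) / 2 with hp_def
    have hL2 : (0:ℝ) < 2 * L := by linarith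
    have ht : 1 < ε ^ 2 / (2 * L) := by
      rw [lt_div_iff₀ hL2]; linarith
    have hp1 : 1 < p := by rw [hp_def]; linarith
    have hp2 : p < ε ^ 2 / (2 * L) := by rw [hp_def]; linarith
    have hp0 : 0 < p := by linarith
    have hLp : L < ε ^ 2 / (2 * p) := by
      rw [lt_div_iff₀ (by linarith : (0:ℝ) < 2 * p)]
      have := (lt_div_iff₀ hL2).mp hp2
      nlinarith
    have key : ∀ᶠ n : ℕ in atTop, Sterm σ h ε n ≤ (n : ℝ) ^ (-p) := by
      filter_upwards [hlim.eventually_lt_const hLp,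
        htheta0.eventually_lt_const (by norm_num : (0:ℝ) < 1),
        hlog.eventually_ge_atTop 1] with n h1 h2 h3
      have hn0 : (0:ℝ) < n := by
        rcases Nat.eq_zero_or_pos n with rfl | hn
        · simp at h3; linarith
        · exact_mod_cast hn
      unfold Sterm
      split_ifs with hz
      · positivity
      · have hθ : 0 < theta2 σ h n := lt_of_le_of_ne (hθnn n) (Ne.symm hz)
        have hb1 : Real.sqrt (theta2 σ h n) ≤ 1 := Real.sqrt_le_one.mpr h2.le
        have hb2 : Real.exp (-(ε ^ 2) / (2 * theta2 σ h n)) ≤ (n:ℝ) ^ (-p) := by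
          rw [Real.rpow_def_of_pos hn0, Real.exp_le_exp]
          have h1' : theta2 σ h n * Real.log n * (2 * p) < ε ^ 2 :=
            (lt_div_iff₀ (by positivity)).mp h1
          rw [div_le_iff₀ (by positivity : (0:ℝ) < 2 * theta2 σ h n)]
          nlinarith
        calc Real.sqrt (theta2 σ h n) * Real.exp (-(ε ^ 2) / (2 * theta2 σ h n))
            ≤ 1 * ((n:ℝ) ^ (-p)) := by
              apply mul_le_mul hb1 hb2 (Real.exp_nonneg _) zero_le_one
          _ = (n:ℝ) ^ (-p) := one_mul _
    have hsum : Summable (fun n : ℕ => (n : ℝ) ^ (-p)) :=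
      Real.summable_nat_rpow.mpr (by linarith)
    have : Summable (fun n : ℕ => Sterm σ h ε n) := by
      apply summable_of_isBigO_nat hsum
      rw [Asymptotics.isBigO_iff]
      refine ⟨1, ?_⟩
      filter_upwards [key] with n hn
      rw [Real.norm_eq_abs, Real.norm_eq_abs, abs_of_nonneg (Sterm_nonneg σ h ε n),
        abs_of_nonneg (by positivity : (0:ℝ) ≤ (n:ℝ) ^ (-p)), one_mul]
      exact hn
    exact (summable_nat_add_iff 1).mpr this
  · -- divergence for 0 < ε < √(2L)
    intro ε hε0 hεlt
    have hε2 : ε ^ 2 < 2 * L := by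
      nlinarith [Real.sq_sqrt (by linarith : (0:ℝ) ≤ 2 * L), Real.sqrt_nonneg (2 * L)]
    have hL2 : (0:ℝ) < 2 * L := by linarith
    have ht : ε ^ 2 / (2 * L) < 1 := by rw [div_lt_one hL2]; linarith
    have ht0 : 0 < ε ^ 2 / (2 * L) := by positivity
    set q : ℝ := (ε ^ 2 / (2 * L) + 1) / 2 with hq_def
    set q' : ℝ := (q + 1) / 2 with hq'_def
    have hq0 : 0 < q := by rw [hq_def]; linarith
    have hq1 : q < 1 := by rw [hq_def]; linarith
    have htq : ε ^ 2 / (2 * L) < q := by rw [hq_def]; linarith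
    have hq'1 : q' < 1 := by rw [hq'_def]; linarith
    have hqq' : q < q' := by rw [hq'_def]; linarith
    set δ : ℝ := q' - q with hδ_def
    have hδ0 : 0 < δ := by rw [hδ_def]; linarith
    set c : ℝ := ε / Real.sqrt (2 * q) with hc_def
    have hc0 : 0 < c := by
      rw [hc_def]; positivity
    have hεqL : ε ^ 2 / (2 * q) < L := by
      rw [div_lt_iff₀ (by linarith : (0:ℝ) < 2 * q)]
      rw [div_lt_iff₀ hL2] at htq
      nlinarith
    have hlogbound : ∀ᶠ n : ℕ in atTop, Real.log n ≤ c * (n : ℝ) ^ δ := by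
      have := (isLittleO_log_rpow_atTop hδ0).def hc0
      have h2 := (tendsto_natCast_atTop_atTop (R := ℝ)).eventually this
      filter_upwards [h2, hlog.eventually_ge_atTop 1,
        (tendsto_natCast_atTop_atTop (R := ℝ)).eventually_ge_atTop 1] with n hn h1 hn1
      rw [Real.norm_eq_abs, Real.norm_eq_abs, abs_of_nonneg (by linarith),
        abs_of_nonneg (by positivity)] at hn
      exact hn
    have key : ∀ᶠ n : ℕ in atTop, (n : ℝ) ^ (-q') ≤ Sterm σ h ε n := by
      filter_upwards [hlim.eventually_const_lt hεqL, hlog.eventually_ge_atTop 1,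
        hlogbound] with n h1 h3 h4
      have hlogn : (0:ℝ) < Real.log n := by linarith
      have hn0 : (0:ℝ) < n := by
        rcases Nat.eq_zero_or_pos n with rfl | hn
        · simp at h3; linarith
        · exact_mod_cast hn
      have hθ : 0 < theta2 σ h n := by
        rcases eq_or_lt_of_le (hθnn n) with he | hgt
        · exfalso
          have h5 : (0:ℝ) < ε ^ 2 / (2 * q) := by positivity
          rw [← he] at h1
          simp at h1
          linarith
        · exact hgt
      unfold Sterm
      rw [if_neg hθ.ne']
      -- lower bound on sqrt part
      have hsq : c / Real.sqrt (Real.log n) ≤ Real.sqrt (theta2 σ h n) := by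
        rw [Real.le_sqrt (by positivity : (0:ℝ) ≤ c / Real.sqrt (Real.log n))]
        swap
        · exact hθ.le
        have hcsq : (c / Real.sqrt (Real.log n)) ^ 2 = (ε ^ 2 / (2 * q)) / Real.log n := by
          rw [hc_def, div_pow, div_pow, Real.sq_sqrt (by linarith : (0:ℝ) ≤ 2 * q),
            Real.sq_sqrt hlogn.le, div_div]
        rw [hcsq, div_le_iff₀ hlogn]
        exact h1.le
      -- lower bound on exp part
      have hexp : (n : ℝ) ^ (-q) ≤ Real.exp (-(ε ^ 2) / (2 * theta2 σ h n)) := by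
        rw [Real.rpow_def_of_pos hn0, Real.exp_le_exp]
        have h1' : ε ^ 2 < theta2 σ h n * Real.log n * (2 * q) :=
          (div_lt_iff₀ (by positivity)).mp h1
        rw [le_div_iff₀ (by positivity : (0:ℝ) < 2 * theta2 σ h n)]
        nlinarith
      -- combine
      have hstep : (n : ℝ) ^ (-δ) ≤ c / Real.sqrt (Real.log n) := by
        rw [le_div_iff₀ (Real.sqrt_pos.mpr hlogn)]
        have h5 : Real.sqrt (Real.log n) ≤ c * (n:ℝ) ^ δ :=
          le_trans (sqrt_le_self_of_one_le h3) h4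
        calc (n:ℝ) ^ (-δ) * Real.sqrt (Real.log n)
            ≤ (n:ℝ) ^ (-δ) * (c * (n:ℝ) ^ δ) := by
              apply mul_le_mul_of_nonneg_left h5 (by positivity)
          _ = c * ((n:ℝ) ^ (-δ) * (n:ℝ) ^ δ) := by ring
          _ = c := by
              rw [← Real.rpow_add hn0, neg_add_cancel, Real.rpow_zero, mul_one]
      calc (n : ℝ) ^ (-q') = (n:ℝ) ^ (-δ) * (n:ℝ) ^ (-q) := by
            rw [← Real.rpow_add hn0]; congr 1; rw [hδ_def]; ring
        _ ≤ (c / Real.sqrt (Real.log n)) * (n:ℝ) ^ (-q) := by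
            apply mul_le_mul_of_nonneg_right hstep (by positivity)
        _ ≤ Real.sqrt (theta2 σ h n) * Real.exp (-(ε ^ 2) / (2 * theta2 σ h n)) := by
            apply mul_le_mul hsq hexp (by positivity) (Real.sqrt_nonneg _)
    intro hSF
    have hsum : Summable (fun n : ℕ => Sterm σ h ε n) := (summable_nat_add_iff 1).mp hSF
    obtain ⟨N, hN⟩ := key.exists_forall_of_atTop
    have hsum2 : Summable (fun n : ℕ => ((n + N : ℕ) : ℝ) ^ (-q')) := by
      apply Summable.of_nonneg_of_le (fun n => by positivity)
        (fun n => hN (n + N) (Nat.le_add_left N n))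
      exact (summable_nat_add_iff N).mpr hsum
    have hsum3 : Summable (fun n : ℕ => (n : ℝ) ^ (-q')) :=
      (summable_nat_add_iff N).mp hsum2
    have := Real.summable_nat_rpow.mp hsum3
    linarith
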